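/- For every α ∈ (1, 2) there exists a unique γ ∈ (−1, 0) such that Ψ(γ + α) = Ψ(γ), where Ψ = Γ'/Γ is the digamma function (equivalently, Γ'(γ+α)·Γ(γ) = Γ'(γ)·Γ(γ+α), with Γ the real Gamma function, which is nonzero on (−1,0) and on (α−1, α)). -/

import Mathlib

open Set Filter Real Topology


lemma term_concave {a b : ℝ} (h1 : 1 ≤ b) (hba : b ≤ a) :
    ConcaveOn ℝ (Ioo (-1:ℝ) 0) (fun γ => Real.log (γ + b) - Real.log (γ + a)) := by
  have hbpos : ∀ γ ∈ Ioo (-1:ℝ) 0, 0 < γ + b := fun γ hγ => by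
    have := hγ.1; linarith
  have hapos : ∀ γ ∈ Ioo (-1:ℝ) 0, 0 < γ + a := fun γ hγ => by
    have := hγ.1; linarith
  have hd : ∀ γ ∈ Ioo (-1:ℝ) 0,
      HasDerivAt (fun γ => Real.log (γ + b) - Real.log (γ + a))
        ((γ + b)⁻¹ - (γ + a)⁻¹) γ := by
    intro γ hγ
    have d1 : HasDerivAt (fun γ : ℝ => Real.log (γ + b)) (1 / (γ + b)) γ :=
      (((hasDerivAt_id γ).add_const b).log (hbpos γ hγ).ne')
    have d2 : HasDerivAt (fun γ : ℝ => Real.log (γ + a)) (1 / (γ + a)) γ :=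
      (((hasDerivAt_id γ).add_const a).log (hapos γ hγ).ne')
    have := d1.sub d2; rw [one_div, one_div] at this; exact this
  apply AntitoneOn.concaveOn_of_deriv (convex_Ioo _ _)
  · exact fun γ hγ => (hd γ hγ).continuousAt.continuousWithinAt
  · rw [interior_Ioo]
    exact fun γ hγ => (hd γ hγ).differentiableAt.differentiableWithinAt
  · rw [interior_Ioo]
    intro x hx y hy hxy
    rw [(hd x hx).deriv, (hd y hy).deriv]
    have hxb := hbpos x hx; have hxa := hapos x hx
    have hyb := hbpos y hy; have hya := hapos y hy
    have key : ∀ z : ℝ, 0 < z + b → 0 < z + a →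
        (z + b)⁻¹ - (z + a)⁻¹ = (a - b) / ((z + b) * (z + a)) := by
      intro z h1 h2; field_simp; ring
    rw [key x hxb hxa, key y hyb hya]
    have hab : (0:ℝ) ≤ a - b := by linarith
    have hle : (x + b) * (x + a) ≤ (y + b) * (y + a) := by nlinarith
    gcongr


lemma approx_concave {α : ℝ} (hα : α ∈ Ioo (1:ℝ) 2) (n : ℕ) :
    ConcaveOn ℝ (Ioo (-1:ℝ) 0) (fun γ =>
      (α - 1) * Real.log n +
        ∑ j ∈ Finset.range (n+1), (Real.log (γ + (1+j)) - Real.log (γ + (α+j)))) := by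
  apply (concaveOn_const _ (convex_Ioo _ _)).add
  have : ∀ s : Finset ℕ, ConcaveOn ℝ (Ioo (-1:ℝ) 0)
      (fun γ => ∑ j ∈ s, (Real.log (γ + (1+j)) - Real.log (γ + (α+j)))) := by
    intro s
    induction s using Finset.induction_on with
    | empty => simpa using concaveOn_const (0:ℝ) (convex_Ioo _ _)
    | insert _ _ h ih =>
      simp only [Finset.sum_insert h]
      exact (term_concave (by simp) (by have := hα.1.le; linarith)).add ih
  exact this _

lemma log_GammaSeq {x : ℝ} (hx : 0 < x) {n : ℕ} (hn : 1 ≤ n) :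
    Real.log (Real.GammaSeq x n)
      = x * Real.log n + Real.log (Nat.factorial n : ℝ) - ∑ j ∈ Finset.range (n+1), Real.log (x + j) := by
  have hnpos : (0:ℝ) < n := by exact_mod_cast hn
  have hf : ∀ j ∈ Finset.range (n+1), x + (j:ℝ) ≠ 0 := fun j _ => by positivity
  rw [Real.GammaSeq, Real.log_div (by positivity) (Finset.prod_ne_zero_iff.2 hf),
    Real.log_mul (by positivity) (by positivity), Real.log_rpow hnpos,
    Real.log_prod hf]

lemma B_concave {α : ℝ} (hα : α ∈ Ioo (1:ℝ) 2) :
    ConcaveOn ℝ (Ioo (-1:ℝ) 0)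
      (fun γ => Real.log (Real.Gamma (γ+α)) - Real.log (Real.Gamma (γ+1))) := by
  set f : ℝ → ℝ := fun γ => Real.log (Real.Gamma (γ+α)) - Real.log (Real.Gamma (γ+1)) with hf
  set L : ℕ → ℝ → ℝ := fun n γ =>
    Real.log (Real.GammaSeq (γ+α) n) - Real.log (Real.GammaSeq (γ+1) n) with hLdef
  have hαpos : ∀ γ ∈ Ioo (-1:ℝ) 0, 0 < γ + α := fun γ hγ => by
    have := hγ.1; have := hα.1; linarith
  have h1pos : ∀ γ ∈ Ioo (-1:ℝ) 0, 0 < γ + 1 := fun γ hγ => by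
    have := hγ.1; linarith
  have hL : ∀ γ ∈ Ioo (-1:ℝ) 0, Tendsto (fun n => L n γ) atTop (𝓝 (f γ)) := by
    intro γ hγ
    exact ((Real.GammaSeq_tendsto_Gamma (γ+α)).log
        (Real.Gamma_pos_of_pos (hαpos γ hγ)).ne').sub
      ((Real.GammaSeq_tendsto_Gamma (γ+1)).log
        (Real.Gamma_pos_of_pos (h1pos γ hγ)).ne')
  have hEq : ∀ γ ∈ Ioo (-1:ℝ) 0, ∀ n : ℕ, 1 ≤ n → L n γ =
      (α - 1) * Real.log n +
        ∑ j ∈ Finset.range (n+1), (Real.log (γ + (1+j)) - Real.log (γ + (α+j))) := by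
    intro γ hγ n hn
    have hs : ∀ c : ℝ, ∑ j ∈ Finset.range (n+1), Real.log (γ + c + j)
        = ∑ j ∈ Finset.range (n+1), Real.log (γ + (c + j)) := by
      intro c
      refine Finset.sum_congr rfl fun j _ => by ring_nf
    simp only [hLdef, log_GammaSeq (hαpos γ hγ) hn, log_GammaSeq (h1pos γ hγ) hn,
      hs α, hs 1, Finset.sum_sub_distrib]
    ring
  refine ⟨convex_Ioo _ _, ?_⟩
  intro x hx y hy a b ha hb hab
  have hz : a • x + b • y ∈ Ioo (-1:ℝ) 0 := (convex_Ioo (-1:ℝ) 0) hx hy ha hb hab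
  have key : ∀ᶠ n : ℕ in atTop, a • L n x + b • L n y ≤ L n (a • x + b • y) := by
    filter_upwards [eventually_ge_atTop 1] with n hn
    have := (approx_concave hα n).2 hx hy ha hb hab
    dsimp only at this
    rwa [← hEq x hx n hn, ← hEq y hy n hn, ← hEq (a • x + b • y) hz n hn] at this
  refine le_of_tendsto_of_tendsto
    (((hL x hx).const_mul a).add ((hL y hy).const_mul b)) (hL _ hz) ?_
  filter_upwards [key] with n h
  simpa [smul_eq_mul] using h

/-- For every `α ∈ (1,2)` there exists a unique `γ ∈ (-1,0)` with
`Ψ(γ+α) = Ψ(γ)`, where `Ψ = Γ'/Γ` is the digamma function; equivalently (clearing the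
nonzero denominators `Γ(γ)` and `Γ(γ+α)`), `Γ'(γ+α)·Γ(γ) = Γ'(γ)·Γ(γ+α)`. -/
theorem digamma_equation_unique_solution
    (α : ℝ) (hα : α ∈ Set.Ioo (1:ℝ) 2) :
    ∃! γ : ℝ, γ ∈ Set.Ioo (-1 : ℝ) 0 ∧
      deriv Real.Gamma (γ + α) * Real.Gamma γ
        = deriv Real.Gamma γ * Real.Gamma (γ + α) := by
  obtain ⟨hα1, hα2⟩ := hα
  set g : ℝ → ℝ := fun γ => Real.log (Real.Gamma (γ + α)) - Real.log (Real.Gamma γ) with hgdef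
  set G : ℝ → ℝ := fun γ => Real.log γ +
    (Real.log (Real.Gamma (γ + α)) - Real.log (Real.Gamma (γ + 1))) with hGdef
  -- basic facts
  have hnm : ∀ γ ∈ Ioo (-1:ℝ) 0, ∀ m : ℕ, γ ≠ -(m:ℝ) := by
    intro γ hγ m
    rcases Nat.eq_zero_or_pos m with rfl | hm
    · simpa using hγ.2.ne
    · have : (1:ℝ) ≤ m := by exact_mod_cast hm
      have := hγ.1
      intro h; rw [h] at this; linarith
  have hΓne : ∀ γ ∈ Ioo (-1:ℝ) 0, Real.Gamma γ ≠ 0 := fun γ hγ =>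
    Real.Gamma_ne_zero (hnm γ hγ)
  have hαpos : ∀ γ ∈ Ioo (-1:ℝ) 0, 0 < γ + α := fun γ hγ => by
    have := hγ.1; linarith
  have hΓαpos : ∀ γ ∈ Ioo (-1:ℝ) 0, 0 < Real.Gamma (γ + α) := fun γ hγ =>
    Real.Gamma_pos_of_pos (hαpos γ hγ)
  have hnmα : ∀ γ ∈ Ioo (-1:ℝ) 0, ∀ m : ℕ, γ + α ≠ -(m:ℝ) := by
    intro γ hγ m
    have h1 := hαpos γ hγ
    have : (0:ℝ) ≤ m := Nat.cast_nonneg m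
    intro h; rw [h] at h1; linarith
  -- g = G on the interval
  have hgG : ∀ γ ∈ Ioo (-1:ℝ) 0, g γ = G γ := by
    intro γ hγ
    have h1 : Real.Gamma (γ + 1) = γ * Real.Gamma γ := Real.Gamma_add_one hγ.2.ne
    have h2 : Real.log (Real.Gamma (γ + 1)) = Real.log γ + Real.log (Real.Gamma γ) := by
      rw [h1, Real.log_mul hγ.2.ne (hΓne γ hγ)]
    simp only [hgdef, hGdef, h2]; ring
  -- derivative of g
  have hd : ∀ γ ∈ Ioo (-1:ℝ) 0, HasDerivAt g
      (deriv Real.Gamma (γ + α) / Real.Gamma (γ + α)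
        - deriv Real.Gamma γ / Real.Gamma γ) γ := by
    intro γ hγ
    have d1 : HasDerivAt (fun γ : ℝ => Real.Gamma (γ + α)) (deriv Real.Gamma (γ + α)) γ := by
      have := ((Real.differentiableAt_Gamma (hnmα γ hγ)).hasDerivAt).comp γ
        ((hasDerivAt_id γ).add_const α)
      simpa [Function.comp_def] using this
    exact (d1.log (hΓαpos γ hγ).ne').sub
      ((Real.differentiableAt_Gamma (hnm γ hγ)).hasDerivAt.log (hΓne γ hγ))
  -- the equation is equivalent to vanishing of `deriv g`
  have hiff : ∀ γ ∈ Ioo (-1:ℝ) 0,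
      (deriv Real.Gamma (γ + α) * Real.Gamma γ
        = deriv Real.Gamma γ * Real.Gamma (γ + α)) ↔ deriv g γ = 0 := by
    intro γ hγ
    rw [(hd γ hγ).deriv, sub_eq_zero, div_eq_div_iff (hΓαpos γ hγ).ne' (hΓne γ hγ)]
  -- strict concavity of g
  have hG : StrictConcaveOn ℝ (Ioo (-1:ℝ) 0) G := by
    refine StrictConcaveOn.add_concaveOn ?_ (B_concave ⟨hα1, hα2⟩)
    exact strictConcaveOn_log_Iio.subset (fun x hx => hx.2) (convex_Ioo _ _)
  have hg : StrictConcaveOn ℝ (Ioo (-1:ℝ) 0) g := by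
    refine ⟨convex_Ioo _ _, ?_⟩
    intro x hx y hy hxy a b ha hb hab
    have hz : a • x + b • y ∈ Ioo (-1:ℝ) 0 := (convex_Ioo (-1:ℝ) 0) hx hy ha.le hb.le hab
    rw [hgG x hx, hgG y hy, hgG _ hz]
    exact hG.2 hx hy hxy ha hb hab
  -- limits at the endpoints
  have hmem0 : Ioo (-1:ℝ) 0 ∈ 𝓝[<] (0:ℝ) :=
    Ioo_mem_nhdsLT_of_mem (by constructor <;> norm_num)
  have hmem1 : Ioo (-1:ℝ) 0 ∈ 𝓝[>] (-1:ℝ) :=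
    Ioo_mem_nhdsGT_of_mem (by constructor <;> norm_num)
  have tendsto0 : Tendsto g (𝓝[<] (0:ℝ)) atBot := by
    have hlog : Tendsto Real.log (𝓝[<] (0:ℝ)) atBot :=
      Real.tendsto_log_nhdsNE_zero.mono_left
        (nhdsWithin_mono 0 fun x hx => ne_of_lt hx)
    have hB : ContinuousAt (fun γ : ℝ =>
        Real.log (Real.Gamma (γ + α)) - Real.log (Real.Gamma (γ + 1))) 0 := by
      have c1 : ContinuousAt (fun γ : ℝ => Real.Gamma (γ + α)) 0 := by
        exact (Real.differentiableAt_Gamma (by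
          intro m; have : (0:ℝ) ≤ m := Nat.cast_nonneg m; simp only [zero_add]
          intro h; rw [h] at hα1; linarith)).continuousAt.comp
          ((continuous_id.add continuous_const).continuousAt)
      have c2 : ContinuousAt (fun γ : ℝ => Real.Gamma (γ + 1)) 0 := by
        exact (Real.differentiableAt_Gamma (by
          intro m; have : (0:ℝ) ≤ m := Nat.cast_nonneg m; simp only [zero_add]
          intro h
          have : (1:ℝ) = -(m:ℝ) := by exact_mod_cast h
          linarith)).continuousAt.comp
          ((continuous_id.add continuous_const).continuousAt)
      have hv1 : Real.Gamma ((0:ℝ) + α) ≠ 0 :=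
        (Real.Gamma_pos_of_pos (by linarith)).ne'
      have hv2 : Real.Gamma ((0:ℝ) + 1) ≠ 0 :=
        (Real.Gamma_pos_of_pos (by norm_num)).ne'
      exact (c1.log hv1).sub (c2.log hv2)
    have hBt : Tendsto (fun γ : ℝ =>
        Real.log (Real.Gamma (γ + α)) - Real.log (Real.Gamma (γ + 1))) (𝓝[<] (0:ℝ))
        (𝓝 (Real.log (Real.Gamma ((0:ℝ) + α)) - Real.log (Real.Gamma ((0:ℝ) + 1)))) :=
      hB.tendsto.mono_left nhdsWithin_le_nhds
    have hGt : Tendsto G (𝓝[<] (0:ℝ)) atBot := by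
      refine tendsto_atBot_add_right_of_ge' _ _ hlog (hBt.eventually (eventually_le_nhds (lt_add_one _)))
    exact hGt.congr' (by filter_upwards [hmem0] with γ hγ using (hgG γ hγ).symm)
  have tendsto1 : Tendsto g (𝓝[>] (-1:ℝ)) atBot := by
    have h₁ : Tendsto (fun γ : ℝ => γ + 1) (𝓝[>] (-1:ℝ)) (𝓝[>] (0:ℝ)) := by
      refine tendsto_nhdsWithin_of_tendsto_nhds_of_eventually_within _ ?_ ?_
      · have : Tendsto (fun γ : ℝ => γ + 1) (𝓝 (-1:ℝ)) (𝓝 ((-1:ℝ) + 1)) :=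
          (continuous_id.add continuous_const).continuousAt
        simpa using this.mono_left nhdsWithin_le_nhds
      · filter_upwards [self_mem_nhdsWithin] with γ (hγ : γ ∈ Ioi (-1:ℝ))
        have : (-1:ℝ) < γ := hγ
        simp only [mem_Ioi]; linarith
    have hGamma_top : Tendsto Real.Gamma (𝓝[>] (0:ℝ)) atTop := by
      have c1 : Tendsto (fun x : ℝ => Real.Gamma (x + 1)) (𝓝[>] (0:ℝ)) (𝓝 1) := by
        have : ContinuousAt (fun x : ℝ => Real.Gamma (x + 1)) 0 := by
          exact (Real.differentiableAt_Gamma (by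
            intro m; have : (0:ℝ) ≤ m := Nat.cast_nonneg m; simp only [zero_add]
            intro h
            have : (1:ℝ) = -(m:ℝ) := by exact_mod_cast h
            linarith)).continuousAt.comp
            ((continuous_id.add continuous_const).continuousAt)
        have h2 := this.tendsto.mono_left (nhdsWithin_le_nhds (s := Ioi (0:ℝ)))
        simpa [Real.Gamma_one] using h2
      have h₂ : Tendsto (fun x : ℝ => Real.Gamma (x + 1) * x⁻¹) (𝓝[>] (0:ℝ)) atTop :=
        Filter.Tendsto.pos_mul_atTop one_pos c1 tendsto_inv_nhdsGT_zero
      refine h₂.congr' ?_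
      filter_upwards [self_mem_nhdsWithin] with x (hx : x ∈ Ioi (0:ℝ))
      have hx0 : x ≠ 0 := (mem_Ioi.mp hx).ne'
      rw [Real.Gamma_add_one hx0]
      field_simp
    have hlogΓ1 : Tendsto (fun γ : ℝ => Real.log (Real.Gamma (γ + 1))) (𝓝[>] (-1:ℝ)) atTop :=
      Real.tendsto_log_atTop.comp (hGamma_top.comp h₁)
    have hneg : Tendsto (fun γ : ℝ => -Real.log (Real.Gamma (γ + 1))) (𝓝[>] (-1:ℝ)) atBot :=
      tendsto_neg_atTop_atBot.comp hlogΓ1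
    have hfin : Tendsto (fun γ : ℝ => Real.log γ + Real.log (Real.Gamma (γ + α)))
        (𝓝[>] (-1:ℝ)) (𝓝 (Real.log (-1:ℝ) + Real.log (Real.Gamma ((-1:ℝ) + α)))) := by
      have c1 : ContinuousAt Real.log (-1:ℝ) := Real.continuousAt_log (by norm_num)
      have c2 : ContinuousAt (fun γ : ℝ => Real.Gamma (γ + α)) (-1:ℝ) := by
        exact (Real.differentiableAt_Gamma (by
          intro m
          rcases Nat.eq_zero_or_pos m with rfl | hm
          · simp only [Nat.cast_zero, neg_zero]; intro h; linarith
          · have : (1:ℝ) ≤ m := by exact_mod_cast hm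
            intro h
            have : (-1:ℝ) + α ≤ -1 := by rw [h]; linarith
            linarith)).continuousAt.comp
          ((continuous_id.add continuous_const).continuousAt)
      have hv : Real.Gamma ((-1:ℝ) + α) ≠ 0 :=
        (Real.Gamma_pos_of_pos (by linarith)).ne'
      exact ((c1.tendsto.comp tendsto_id).add ((c2.log hv).tendsto)).mono_left
        nhdsWithin_le_nhds
    have hGt : Tendsto G (𝓝[>] (-1:ℝ)) atBot := by
      have := tendsto_atBot_add_left_of_ge' _ _
        (hfin.eventually (eventually_le_nhds (lt_add_one _))) hneg
      refine this.congr ?_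
      intro γ; simp only [hGdef]; ring
    exact hGt.congr' (by filter_upwards [hmem1] with γ hγ using (hgG γ hγ).symm)
  -- existence of an interior maximum point
  have hc : (-1/2 : ℝ) ∈ Ioo (-1:ℝ) 0 := by norm_num
  obtain ⟨p, hpl, hpm⟩ := ((tendsto1.eventually (eventually_lt_atBot (g (-1/2)))).and
    (Ioo_mem_nhdsGT_of_mem (show (-1:ℝ) ∈ Ico (-1:ℝ) (-1/2) by norm_num))).exists
  obtain ⟨q, hql, hqm⟩ := ((tendsto0.eventually (eventually_lt_atBot (g (-1/2)))).and
    (Ioo_mem_nhdsLT_of_mem (show (0:ℝ) ∈ Ioc (-1/2:ℝ) 0 by norm_num))).exists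
  have hpq : p < q := lt_trans hpm.2 hqm.1
  have hKsub : Icc p q ⊆ Ioo (-1:ℝ) 0 := fun z hz =>
    ⟨lt_of_lt_of_le hpm.1 hz.1, lt_of_le_of_lt hz.2 hqm.2⟩
  have hcont : ContinuousOn g (Icc p q) := fun z hz =>
    (hd z (hKsub hz)).continuousAt.continuousWithinAt
  have hcmem : (-1/2 : ℝ) ∈ Icc p q := ⟨hpm.2.le, hqm.1.le⟩
  obtain ⟨t, htK, htmax⟩ := isCompact_Icc.exists_isMaxOn ⟨_, hcmem⟩ hcont
  have hgt : g (-1/2) ≤ g t := htmax hcmem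
  have htp : p < t := by
    rcases lt_or_eq_of_le htK.1 with h | h
    · exact h
    · exfalso; rw [← h] at hgt; linarith
  have htq : t < q := by
    rcases lt_or_eq_of_le htK.2 with h | h
    · exact h
    · exfalso; rw [h] at hgt; linarith
  have htmem : t ∈ Ioo (-1:ℝ) 0 := hKsub htK
  have hderiv0 : deriv g t = 0 :=
    (htmax.isLocalMax (Icc_mem_nhds htp htq)).deriv_eq_zero
  -- conclusion
  have hanti : StrictAntiOn (deriv g) (Ioo (-1:ℝ) 0) :=
    hg.strictAntiOn_deriv (fun γ hγ => (hd γ hγ).differentiableAt)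
  refine ⟨t, ⟨htmem, (hiff t htmem).mpr hderiv0⟩, ?_⟩
  rintro y ⟨hy, hyeq⟩
  exact hanti.injOn hy htmem (by rw [(hiff y hy).mp hyeq, hderiv0])
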